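/- If R is a field, then the universal Novikov field Λ (formal sums Σ aₖ T^{λₖ} with λₖ ∈ ℝ increasing to ∞) is a field: every nonzero element is invertible. -/

import Mathlib

open HahnSeries

/-- Sums of multisets of bounded size drawn from a finite set form a finite set. -/
lemma novikov_aux_sums_finite (F : Set ℝ) (hF : F.Finite) :
    ∀ N : ℕ, {x : ℝ | ∃ m : Multiset ℝ, (∀ y ∈ m, y ∈ F) ∧ m.card ≤ N ∧ m.sum = x}.Finite := by
  intro N
  induction N with
  | zero =>
    apply Set.Finite.subset (Set.finite_singleton (0:ℝ))
    rintro x ⟨m, _, hcard, hsum⟩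
    have : m = 0 := Multiset.card_eq_zero.mp (Nat.le_zero.mp hcard)
    simp [this] at hsum
    simp [← hsum]
  | succ N ih =>
    apply Set.Finite.subset (ih.union (Set.Finite.image2 (· + ·) hF ih))
    rintro x ⟨m, hmem, hcard, hsum⟩
    rcases eq_or_ne m 0 with rfl | hne
    · exact Or.inl ⟨0, by simp, Nat.zero_le _, by simpa using hsum⟩
    · obtain ⟨a, ha⟩ := Multiset.exists_mem_of_ne_zero hne
      have hm : a ::ₘ m.erase a = m := Multiset.cons_erase ha
      rw [← hm] at hcard hsum
      refine Or.inr ⟨a, hmem a ha, (m.erase a).sum,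
        ⟨m.erase a, fun y hy => hmem y (Multiset.mem_of_mem_erase hy), ?_, rfl⟩, ?_⟩
      · simpa [Multiset.card_cons, Nat.succ_le_succ_iff] using hcard
      · simpa [Multiset.sum_cons] using hsum

lemma novikov_aux_closure (T : Set ℝ) (hpos : T ⊆ Set.Ioi 0)
    (hT : ∀ B : ℝ, (T ∩ Set.Iic B).Finite) (B : ℝ) :
    ((AddSubmonoid.closure T : Set ℝ) ∩ Set.Iic B).Finite := by
  set F : Set ℝ := T ∩ Set.Iic B with hFdef
  have hF : F.Finite := hT B
  -- every element of a representing multiset lies in F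
  have hmemF : ∀ (m : Multiset ℝ), (∀ y ∈ m, y ∈ T) → m.sum ≤ B → ∀ y ∈ m, y ∈ F := by
    intro m hmem hsum y hy
    refine ⟨hmem y hy, le_trans ?_ hsum⟩
    exact Multiset.single_le_sum (fun z hz => le_of_lt (hpos (hmem z hz))) y hy
  rcases F.eq_empty_or_nonempty with hFe | hFne
  · apply Set.Finite.subset (Set.finite_singleton (0:ℝ))
    rintro x ⟨hx, hxB⟩
    obtain ⟨m, hmem, hsum⟩ := AddSubmonoid.exists_multiset_of_mem_closure hx
    have : m = 0 := by
      by_contra hne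
      obtain ⟨a, ha⟩ := Multiset.exists_mem_of_ne_zero hne
      exact (hFe ▸ hmemF m hmem (hsum ▸ hxB) a ha : (a ∈ (∅ : Set ℝ)))
    simp [this] at hsum
    simp [← hsum]
  · have hFs : hF.toFinset.Nonempty := by
      rwa [Set.Finite.toFinset_nonempty]
    set ε : ℝ := hF.toFinset.min' hFs with hεdef
    have hεF : ε ∈ F := hF.mem_toFinset.mp (hF.toFinset.min'_mem hFs)
    have hεle : ∀ y ∈ F, ε ≤ y := fun y hy =>
      hF.toFinset.min'_le y (hF.mem_toFinset.mpr hy)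
    have hεpos : 0 < ε := hpos hεF.1
    set N : ℕ := ⌈B / ε⌉₊ with hN
    apply Set.Finite.subset (novikov_aux_sums_finite F hF N)
    rintro x ⟨hx, hxB⟩
    obtain ⟨m, hmem, hsum⟩ := AddSubmonoid.exists_multiset_of_mem_closure hx
    have hmF : ∀ y ∈ m, y ∈ F := hmemF m hmem (hsum ▸ hxB)
    have hcard : (m.card : ℝ) * ε ≤ B := by
      calc (m.card : ℝ) * ε = m.card • ε := by simp [nsmul_eq_mul]
        _ ≤ m.sum := Multiset.card_nsmul_le_sum (fun y hy => hεle y (hmF y hy))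
        _ ≤ B := hsum ▸ hxB
    have : (m.card : ℝ) ≤ B / ε := (le_div_iff₀ hεpos).mpr hcard
    have hcardN : m.card ≤ N := by
      have := this.trans (Nat.le_ceil (B / ε))
      exact_mod_cast this
    exact ⟨m, hmF, hcardN, hsum⟩

theorem novikov_field_is_field (R : Type*) [Field R]
    (S : Subring (HahnSeries ℝ R))
    (hS : (S : Set (HahnSeries ℝ R)) =
      {f | ∀ B : ℝ, (f.support ∩ Set.Iic B).Finite}) :
    ∀ f : S, f ≠ 0 → ∃ g : S, f * g = 1 := by
  have hmem : ∀ x : HahnSeries ℝ R, x ∈ S ↔ ∀ B : ℝ, (x.support ∩ Set.Iic B).Finite := by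
    intro x
    constructor
    · intro hx B; have := hS ▸ (show x ∈ (S : Set _) from hx); exact this B
    · intro hx; show x ∈ (S : Set _); rw [hS]; exact hx
  intro f hf
  have f0 : (f : HahnSeries ℝ R) ≠ 0 := fun h => hf (Subtype.ext h)
  set b : ℝ := -(f : HahnSeries ℝ R).order with hb
  set d : HahnSeries ℝ R := single b ((f : HahnSeries ℝ R).leadingCoeff)⁻¹ with hd
  have hy0 : 0 < (1 - d * (f : HahnSeries ℝ R)).orderTop :=
    HahnSeries.unit_aux (f : HahnSeries ℝ R)
      (inv_mul_cancel₀ (HahnSeries.leadingCoeff_ne_zero.mpr f0)) _ (neg_add_cancel _)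
  set y : HahnSeries ℝ R := 1 - d * (f : HahnSeries ℝ R) with hydef
  set h : HahnSeries ℝ R := (HahnSeries.SummableFamily.powers y).hsum with hh
  have key : (1 - y) * h = 1 := HahnSeries.SummableFamily.one_sub_self_mul_hsum_powers hy0
  have key' : d * (f : HahnSeries ℝ R) * h = 1 := by
    have : (1 : HahnSeries ℝ R) - y = d * f := by rw [hydef]; ring
    rwa [this] at key
  -- membership facts
  have hdS : d ∈ S := by
    rw [hmem]
    intro B
    exact Set.Finite.inter_of_left (Set.Finite.subset (Set.finite_singleton b)
      (HahnSeries.support_single_subset)) _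
  have hyS : y ∈ S := by
    rw [hydef]
    exact Subring.sub_mem S (Subring.one_mem S) (Subring.mul_mem S hdS f.2)
  have hysupp : ∀ B : ℝ, (y.support ∩ Set.Iic B).Finite := (hmem y).mp hyS
  have hypos : y.support ⊆ Set.Ioi 0 := by
    intro g hg
    have h1 : y.orderTop ≤ (g : WithTop ℝ) := HahnSeries.orderTop_le_of_coeff_ne_zero hg
    have : (0 : WithTop ℝ) < (g : WithTop ℝ) := lt_of_lt_of_le hy0 h1
    exact_mod_cast this
  -- support of h lies in the closure of y.support
  have hpow : ∀ n : ℕ, ((y ^ n).support : Set ℝ) ⊆ (AddSubmonoid.closure y.support : Set ℝ) := by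
    intro n
    induction n with
    | zero =>
      intro g hg
      simp only [pow_zero, HahnSeries.support_one, Set.mem_singleton_iff] at hg
      rw [hg]; exact AddSubmonoid.zero_mem _
    | succ n ih =>
      intro g hg
      rw [pow_succ] at hg
      obtain ⟨i, hi, j, hj, rfl⟩ := HahnSeries.support_mul_subset hg
      exact AddSubmonoid.add_mem _ (ih hi) (AddSubmonoid.subset_closure hj)
  have hhsupp : h.support ⊆ (AddSubmonoid.closure y.support : Set ℝ) := by
    intro g hg
    have := HahnSeries.SummableFamily.support_hsum_subset hg
    obtain ⟨_, ⟨n, rfl⟩, hn⟩ := this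
    simp only [HahnSeries.SummableFamily.powers_of_orderTop_pos hy0] at hn
    exact hpow n hn
  set g : HahnSeries ℝ R := d * h with hg
  have hgsupp : g.support ⊆ (fun t => b + t) '' (AddSubmonoid.closure y.support : Set ℝ) := by
    intro a ha
    have hcoeff : g.coeff a = ((f : HahnSeries ℝ R).leadingCoeff)⁻¹ * h.coeff (a - b) := by
      have := HahnSeries.coeff_single_mul_add (r := ((f : HahnSeries ℝ R).leadingCoeff)⁻¹)
        (x := h) (a := a - b) (b := b)
      rwa [sub_add_cancel] at this
    have hne : h.coeff (a - b) ≠ 0 := by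
      intro h0
      apply ha
      rw [hcoeff, h0, mul_zero]
    exact ⟨a - b, hhsupp hne, by ring⟩
  have hgS : g ∈ S := by
    rw [hmem]
    intro B
    apply Set.Finite.subset (Set.Finite.image (fun t => b + t)
      (novikov_aux_closure y.support hypos hysupp (B - b)))
    rintro a ⟨ha, haB⟩
    obtain ⟨t, ht, rfl⟩ := hgsupp ha
    exact ⟨t, ⟨ht, by simpa using le_sub_iff_add_le'.mpr haB⟩, rfl⟩
  refine ⟨⟨g, hgS⟩, ?_⟩
  apply Subtype.ext
  push_cast
  calc (f : HahnSeries ℝ R) * g = d * (f : HahnSeries ℝ R) * h := by rw [hg]; ring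
    _ = 1 := key'
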